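/- arXiv:2502.10985 — 5 statements merged into one kernel-verified Lean document; each statement's English description precedes it below -/
import Mathlib

section
/- Let K be a nonempty closed convex subset of a real inner product space (Euclidean space ℝ^n) with diameter at most D > 0, and let f_1, ..., f_T : ℝ^n → ℝ be convex differentiable functions whose gradients on K have norm at most G > 0. Consider the online gradient descent iterates defined by x_1 ∈ K and x_{t+1} = Π_K(x_t − η_t ∇f_t(x_t)), where Π_K denotes the metric projection onto K and η_t = D/(G√t). Then for all T ≥ 1, the regret satisfies ∑_{t=1}^T f_t(x_t) − min_{x ∈ K} ∑_{t=1}^T f_t(x) ≤ (3/2) · G · D · √T. -/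
set_option linter.unusedSectionVars false


open RealInnerProductSpace

variable {E : Type*} [NormedAddCommGroup E] [InnerProductSpace ℝ E] [CompleteSpace E]

/-- Gradient inequality for convex differentiable functions. -/
lemma ogd_convex_grad {f : E → ℝ} (hc : ConvexOn ℝ Set.univ f)
    (hd : Differentiable ℝ f) (x y : E) :
    f x + ⟪gradient f x, y - x⟫ ≤ f y := by
  set g : ℝ → ℝ := fun θ => f (θ • (y - x) + x) with hgdef
  have hgc : ConvexOn ℝ Set.univ g := by
    have h := hc.comp_affineMap (AffineMap.lineMap x y : ℝ →ᵃ[ℝ] E)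
    have : (Set.univ : Set ℝ) ⊆ (AffineMap.lineMap x y : ℝ →ᵃ[ℝ] E) ⁻¹' Set.univ := by
      intro a _; trivial
    refine ConvexOn.congr (h.subset this (convex_univ)) ?_
    intro θ _
    simp only [hgdef, Function.comp_apply, AffineMap.lineMap_apply_module]
    congr 1
    module
  have hline : HasDerivAt (fun θ : ℝ => θ • (y - x) + x) (y - x) 0 := by
    simpa using ((hasDerivAt_id (0:ℝ)).smul_const (y - x)).add_const x
  have hfg : HasFDerivAt f (InnerProductSpace.toDual ℝ E (gradient f x)) x :=
    hasGradientAt_iff_hasFDerivAt.mp (hd x).hasGradientAt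
  have hgd : HasDerivAt g ⟪gradient f x, y - x⟫ 0 := by
    have hfg' : HasFDerivAt f (InnerProductSpace.toDual ℝ E (gradient f x))
        ((0:ℝ) • (y - x) + x) := by simpa using hfg
    have := hfg'.comp_hasDerivAt (0:ℝ) hline
    rw [InnerProductSpace.toDual_apply_apply] at this; exact this
  have hslope := hgc.deriv_le_slope (Set.mem_univ (0:ℝ)) (Set.mem_univ (1:ℝ))
    one_pos hgd.differentiableAt
  rw [hgd.deriv] at hslope
  have h0 : g 0 = f x := by simp [hgdef]
  have h1 : g 1 = f y := by simp [hgdef]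
  have : slope g 0 1 = f y - f x := by
    rw [slope_def_field]; simp [h0, h1]
  rw [this] at hslope
  linarith

/-- The metric projection onto a convex set doesn't increase distance to points of the set. -/
lemma ogd_proj_sq {K : Set E} (hKcv : Convex ℝ K)
    (proj : E → E) (hprojmem : ∀ y, proj y ∈ K)
    (hprojdist : ∀ y, ∀ z ∈ K, dist (proj y) y ≤ dist z y)
    (y z : E) (hz : z ∈ K) :
    ‖proj y - z‖ ^ 2 ≤ ‖y - z‖ ^ 2 := by
  haveI : Nonempty K := ⟨⟨z, hz⟩⟩
  have heq : ‖y - proj y‖ = ⨅ w : K, ‖y - w‖ := by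
    refine le_antisymm ?_ ?_
    · refine le_ciInf fun w => ?_
      have := hprojdist y w w.2
      simpa [dist_eq_norm, norm_sub_rev] using this
    · have hbdd : BddBelow (Set.range fun w : K => ‖y - (w:E)‖) :=
        ⟨0, by rintro _ ⟨w, rfl⟩; exact norm_nonneg _⟩
      exact ciInf_le hbdd ⟨proj y, hprojmem y⟩
  have hin := (norm_eq_iInf_iff_real_inner_le_zero hKcv (hprojmem y)).mp heq z hz
  have hexp : ‖y - z‖ ^ 2 = ‖y - proj y‖ ^ 2 + 2 * ⟪y - proj y, proj y - z⟫
      + ‖proj y - z‖ ^ 2 := by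
    have : y - z = (y - proj y) + (proj y - z) := by abel
    rw [this, norm_add_sq_real]
  have hneg : ⟪y - proj y, proj y - z⟫ = - ⟪y - proj y, z - proj y⟫ := by
    rw [← inner_neg_right]; congr 1; abel
  nlinarith [sq_nonneg ‖y - proj y‖, norm_nonneg (y - proj y)]

/-- `∑_{t=1}^T 1/√t ≤ 2√T`. -/
lemma ogd_sqrt_sum : ∀ T : ℕ, ∑ t ∈ Finset.Icc 1 T, (1 / Real.sqrt t) ≤ 2 * Real.sqrt T := by
  intro T
  induction T with
  | zero => simp
  | succ T ih =>
    rw [← Finset.insert_Icc_right_eq_Icc_add_one (by omega), Finset.sum_insert (by simp)]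
    have h1 : (0:ℝ) < Real.sqrt (T + 1) := Real.sqrt_pos.2 (by positivity)
    have ha : Real.sqrt T ^ 2 = T := Real.sq_sqrt (by positivity)
    have hb : Real.sqrt (T + 1) ^ 2 = (T:ℝ) + 1 := by
      rw [Real.sq_sqrt (by positivity)]
    have h2 : (0:ℝ) ≤ Real.sqrt T := Real.sqrt_nonneg _
    have key : 1 / Real.sqrt ((T:ℕ)+1 : ℕ) ≤ 2 * Real.sqrt ((T:ℕ)+1 : ℕ) - 2 * Real.sqrt T := by
      push_cast
      rw [div_le_iff₀ h1]
      nlinarith [sq_nonneg (Real.sqrt ((T:ℝ) + 1) - Real.sqrt T)]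
    have : (((T+1 : ℕ)):ℝ) = (T:ℝ) + 1 := by push_cast; ring
    push_cast at key ⊢
    linarith


/-- **Online gradient descent regret bound** (Hazan, Theorem 3.1).
For convex differentiable cost functions `f 1, …, f T` with gradients bounded by `G` on a
nonempty closed convex set `K` of diameter at most `D`, the projected online gradient
descent iterates with step sizes `η t = D / (G √t)` satisfy
`∑ f t (x t) - min_{x ∈ K} ∑ f t x ≤ (3/2) G D √T`. -/
theorem ogd_regret_bound
    (n : ℕ) (K : Set (EuclideanSpace ℝ (Fin n)))
    (hKne : K.Nonempty) (hKcl : IsClosed K) (hKcv : Convex ℝ K)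
    (D G : ℝ) (hD : 0 < D) (hG : 0 < G)
    (hdiam : ∀ x ∈ K, ∀ y ∈ K, dist x y ≤ D)
    (T : ℕ) (hT : 1 ≤ T)
    (f : ℕ → EuclideanSpace ℝ (Fin n) → ℝ)
    (hconv : ∀ t, ConvexOn ℝ Set.univ (f t))
    (hdiff : ∀ t, Differentiable ℝ (f t))
    (hgrad : ∀ t, ∀ x ∈ K, ‖gradient (f t) x‖ ≤ G)
    (proj : EuclideanSpace ℝ (Fin n) → EuclideanSpace ℝ (Fin n))
    (hprojmem : ∀ y, proj y ∈ K)
    (hprojdist : ∀ y, ∀ z ∈ K, dist (proj y) y ≤ dist z y)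
    (x : ℕ → EuclideanSpace ℝ (Fin n))
    (hx1 : x 1 ∈ K)
    (hstep : ∀ t, 1 ≤ t →
      x (t + 1) = proj (x t - (D / (G * Real.sqrt t)) • gradient (f t) (x t)))
    (xstar : EuclideanSpace ℝ (Fin n)) (hxstar : xstar ∈ K)
    (hmin : IsMinOn (fun z => ∑ t ∈ Finset.Icc 1 T, f t z) K xstar) :
    ∑ t ∈ Finset.Icc 1 T, f t (x t) - ∑ t ∈ Finset.Icc 1 T, f t xstar
      ≤ (3 / 2) * G * D * Real.sqrt T := by
  -- membership of the iterates
  have hmem : ∀ t, 1 ≤ t → x t ∈ K := by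
    intro t ht
    match t, ht with
    | 1, _ => exact hx1
    | (s+2), _ =>
      rw [hstep (s+1) (by omega)]; exact hprojmem _
  -- abbreviations
  set a : ℕ → ℝ := fun t => ‖x t - xstar‖ ^ 2 with ha_def
  have ha_nonneg : ∀ t, 0 ≤ a t := fun t => sq_nonneg _
  have ha_le : ∀ t, 1 ≤ t → a t ≤ D ^ 2 := by
    intro t ht
    have h := hdiam (x t) (hmem t ht) xstar hxstar
    rw [dist_eq_norm] at h
    have := norm_nonneg (x t - xstar)
    simp only [ha_def]
    nlinarith
  -- key per-step inequality
  set c : ℝ := G / (2 * D) with hc_def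
  have hc0 : (0:ℝ) ≤ c := by rw [hc_def]; positivity
  have hkey : ∀ t, 1 ≤ t →
      ⟪gradient (f t) (x t), x t - xstar⟫ ≤
        c * Real.sqrt t * (a t - a (t + 1)) + D * G / (2 * Real.sqrt t) := by
    intro t ht
    set s := Real.sqrt t with hs_def
    have hs : 0 < s := Real.sqrt_pos.2 (by
      have : (1:ℝ) ≤ (t:ℝ) := by exact_mod_cast ht
      linarith)
    set η : ℝ := D / (G * s) with hη_def
    have hη : 0 < η := by positivity
    set g := gradient (f t) (x t) with hg_def
    have hgn : ‖g‖ ≤ G := hgrad t (x t) (hmem t ht)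
    have hproj : a (t + 1) ≤ ‖(x t - η • g) - xstar‖ ^ 2 := by
      show ‖x (t + 1) - xstar‖ ^ 2 ≤ _
      rw [hstep t ht]
      exact ogd_proj_sq hKcv proj hprojmem hprojdist _ _ hxstar
    have hexp : ‖(x t - η • g) - xstar‖ ^ 2
        = a t - 2 * η * ⟪x t - xstar, g⟫ + η ^ 2 * ‖g‖ ^ 2 := by
      have h1 : (x t - η • g) - xstar = (x t - xstar) - η • g := by abel
      rw [h1, norm_sub_sq_real, real_inner_smul_right, norm_smul]
      simp only [Real.norm_eq_abs, abs_of_pos hη, ha_def]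
      ring
    have hg2 : ‖g‖ ^ 2 ≤ G ^ 2 := by nlinarith [norm_nonneg g]
    have h2' : η ^ 2 * ‖g‖ ^ 2 ≤ η ^ 2 * G ^ 2 :=
      mul_le_mul_of_nonneg_left hg2 (sq_nonneg η)
    rw [hexp] at hproj
    have h2 : 2 * η * ⟪x t - xstar, g⟫ ≤ (a t - a (t + 1)) + η ^ 2 * G ^ 2 := by
      linarith
    have hcomm : ⟪g, x t - xstar⟫ = ⟪x t - xstar, g⟫ := real_inner_comm _ _
    rw [hcomm]
    have e1 : c * s * (a t - a (t + 1)) + D * G / (2 * s)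
        = (1 / (2 * η)) * (a t - a (t + 1)) + η * G ^ 2 / 2 := by
      rw [hc_def, hη_def]; field_simp
    rw [e1]
    have h3 : 2 * η * ⟪x t - xstar, g⟫
        ≤ 2 * η * ((1 / (2 * η)) * (a t - a (t + 1)) + η * G ^ 2 / 2) := by
      have heq : 2 * η * ((1 / (2 * η)) * (a t - a (t + 1)) + η * G ^ 2 / 2)
          = (a t - a (t + 1)) + η ^ 2 * G ^ 2 := by field_simp
      rw [heq]; exact h2
    exact le_of_mul_le_mul_left h3 (by positivity)
  -- main claim by induction
  have hmain : ∀ S : ℕ, 1 ≤ S →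
      ∑ t ∈ Finset.Icc 1 S, ⟪gradient (f t) (x t), x t - xstar⟫
        ≤ c * Real.sqrt S * (D ^ 2 - a (S + 1))
          + ∑ t ∈ Finset.Icc 1 S, D * G / (2 * Real.sqrt t) := by
    intro S hS
    induction S, hS using Nat.le_induction with
    | base =>
      simp only [Finset.Icc_self, Finset.sum_singleton, Nat.cast_one, Real.sqrt_one]
      have h := hkey 1 le_rfl
      simp only [Nat.cast_one, Real.sqrt_one] at h
      have key : 0 ≤ c * (D ^ 2 - a 1) := mul_nonneg hc0 (by linarith [ha_le 1 le_rfl])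
      nlinarith [h, key]
    | succ S hS ih =>
      rw [← Finset.insert_Icc_right_eq_Icc_add_one (by omega : 1 ≤ S + 1),
        Finset.sum_insert (by simp), Finset.sum_insert (by simp)]
      have hk := hkey (S + 1) (by omega)
      have hsle : Real.sqrt S ≤ Real.sqrt (S + 1) := by
        apply Real.sqrt_le_sqrt; push_cast; linarith
      have haS : a (S + 1) ≤ D ^ 2 := ha_le (S + 1) (by omega)
      have keymul : c * (Real.sqrt S * (D ^ 2 - a (S + 1)))
          ≤ c * (Real.sqrt (S + 1) * (D ^ 2 - a (S + 1))) := by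
        apply mul_le_mul_of_nonneg_left _ hc0
        apply mul_le_mul_of_nonneg_right hsle (by linarith)
      have hcast : ((S + 1 : ℕ) : ℝ) = (S : ℝ) + 1 := by push_cast; ring
      rw [hcast] at hk ⊢
      nlinarith [keymul, ih, hk]
  -- convexity: regret bounded by sum of inner products
  have hreg : ∑ t ∈ Finset.Icc 1 T, f t (x t) - ∑ t ∈ Finset.Icc 1 T, f t xstar
      ≤ ∑ t ∈ Finset.Icc 1 T, ⟪gradient (f t) (x t), x t - xstar⟫ := by
    rw [← Finset.sum_sub_distrib]
    apply Finset.sum_le_sum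
    intro t _
    have h := ogd_convex_grad (hconv t) (hdiff t) (x t) xstar
    have hneg : ⟪gradient (f t) (x t), xstar - x t⟫
        = - ⟪gradient (f t) (x t), x t - xstar⟫ := by
      rw [← inner_neg_right]; congr 1; abel
    rw [hneg] at h
    linarith
  -- put everything together
  have hsum : ∑ t ∈ Finset.Icc 1 T, D * G / (2 * Real.sqrt t)
      ≤ D * G * Real.sqrt T := by
    have : ∀ t ∈ Finset.Icc 1 T, D * G / (2 * Real.sqrt t)
        = (D * G / 2) * (1 / Real.sqrt t) := by
      intro t _; ring
    rw [Finset.sum_congr rfl this, ← Finset.mul_sum]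
    have h := ogd_sqrt_sum T
    have : (0:ℝ) ≤ D * G / 2 := by positivity
    nlinarith [h]
  have hmain' := hmain T hT
  have hfin : c * Real.sqrt T * (D ^ 2 - a (T + 1))
      ≤ G * D * Real.sqrt T / 2 := by
    have h1 : (0:ℝ) ≤ c * Real.sqrt T := mul_nonneg hc0 (Real.sqrt_nonneg _)
    have h2 : D ^ 2 - a (T + 1) ≤ D ^ 2 := by
      have := ha_nonneg (T + 1); linarith
    have h3 : c * Real.sqrt T * (D ^ 2 - a (T + 1))
        ≤ c * Real.sqrt T * D ^ 2 := mul_le_mul_of_nonneg_left h2 h1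
    have h4 : c * Real.sqrt T * D ^ 2 = G * D * Real.sqrt T / 2 := by
      rw [hc_def]; field_simp
    linarith
  calc ∑ t ∈ Finset.Icc 1 T, f t (x t) - ∑ t ∈ Finset.Icc 1 T, f t xstar
      ≤ ∑ t ∈ Finset.Icc 1 T, ⟪gradient (f t) (x t), x t - xstar⟫ := hreg
    _ ≤ c * Real.sqrt T * (D ^ 2 - a (T + 1))
          + ∑ t ∈ Finset.Icc 1 T, D * G / (2 * Real.sqrt t) := hmain'
    _ ≤ G * D * Real.sqrt T / 2 + D * G * Real.sqrt T := by linarith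
    _ = (3 / 2) * G * D * Real.sqrt T := by ring
end

section
/- Fix N ≥ 1, a matrix P : Fin N → Fin N → ℝ with 0 ≤ P i j ≤ 1 and P j i = 1 − P i j for all i, j, and a probability vector q : Fin N → ℝ with q i > 0 for all i and ∑_i q i = 1 (product matchmaking: player pair (i,j) is drawn with probability q i · q j). Suppose θ* : Fin N → ℝ is a stationary point of the population Bradley–Terry negative log-likelihood, i.e., for every i, ∑_j q i · q j · (P i j − σ(θ* i − θ* j)) = 0, where σ(x) = 1/(1+e^{−x}) is the logistic function. Then for all players i, k: θ* i ≤ θ* k if and only if ∑_j q j · P i j ≤ ∑_j q j · P k j; that is, the ranking induced by θ* is identical to the ranking induced by the q-average win rate. -/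
/-- The logistic function `σ(x) = 1 / (1 + e^{-x})`. -/
noncomputable def logistic (x : ℝ) : ℝ := 1 / (1 + Real.exp (-x))

lemma logistic_strictMono : StrictMono logistic := by
  intro x y hxy
  unfold logistic
  have hx : (0:ℝ) < 1 + Real.exp (-y) := by positivity
  have hy : (0:ℝ) < 1 + Real.exp (-x) := by positivity
  have := Real.exp_lt_exp.mpr (neg_lt_neg hxy)
  apply div_lt_div_of_pos_left one_pos hx
  linarith

/-- Under product matchmaking `q i * q j`, any stationary point `θ` of the population
Bradley–Terry negative log-likelihood induces the same ranking as the `q`-average win rate. -/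
theorem elo_mle_ranking_eq_avg_winrate_ranking
    (N : ℕ) (hN : 1 ≤ N)
    (P : Fin N → Fin N → ℝ)
    (hP0 : ∀ i j, 0 ≤ P i j) (hP1 : ∀ i j, P i j ≤ 1)
    (hPskew : ∀ i j, P j i = 1 - P i j)
    (q : Fin N → ℝ) (hq : ∀ i, 0 < q i) (hqsum : ∑ i, q i = 1)
    (θ : Fin N → ℝ)
    (hstat : ∀ i, ∑ j, q i * q j * (P i j - logistic (θ i - θ j)) = 0) :
    ∀ i k, θ i ≤ θ k ↔ (∑ j, q j * P i j) ≤ ∑ j, q j * P k j := by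
  have key : ∀ i, (∑ j, q j * P i j) = ∑ j, q j * logistic (θ i - θ j) := by
    intro i
    have h := hstat i
    have h2 : q i * ∑ j, q j * (P i j - logistic (θ i - θ j)) = 0 := by
      rw [Finset.mul_sum]; rw [← h]; congr 1; ext j; ring
    have h3 : ∑ j, q j * (P i j - logistic (θ i - θ j)) = 0 :=
      (mul_eq_zero.mp h2).resolve_left (ne_of_gt (hq i))
    have h4 : ∑ j, (q j * P i j - q j * logistic (θ i - θ j)) = 0 := by
      rw [← h3]; congr 1; ext j; ring
    rw [Finset.sum_sub_distrib] at h4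
    linarith
  have F : StrictMono (fun t => ∑ j, q j * logistic (t - θ j)) := by
    intro x y hxy
    apply Finset.sum_lt_sum_of_nonempty
    · exact Finset.univ_nonempty_iff.mpr (Fin.pos_iff_nonempty.mp hN)
    · intro j _
      exact mul_lt_mul_of_pos_left (logistic_strictMono (by linarith)) (hq j)
  intro i k
  rw [key i, key k]
  exact ⟨fun h => F.le_iff_le.mpr h, fun h => F.le_iff_le.mp h⟩
end

section
/- Fix N ≥ 1 and a matrix P : Fin N → Fin N → ℝ with 0 ≤ P i j ≤ 1 and P j i = 1 − P i j for all i, j, and suppose P is strongly stochastically transitive with respect to an ordering π. Let θ* : Fin N → ℝ satisfy the uniform-matchmaking stationarity condition of the population Bradley–Terry negative log-likelihood: ∑_j (P i j − σ(θ*_i − θ*_j)) = 0 for every i, where σ(x) = 1/(1+e^{−x}). Then θ* ranks players consistently with π: for all i, j with π(i) > π(j), θ*_i ≥ θ*_j. That is, under uniform matchmaking the population Elo/Bradley–Terry MLE recovers the true SST ranking. -/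
/-- Under uniform matchmaking, a stationary point `θ` of the population Bradley–Terry
negative log-likelihood (i.e. `∑ j, (P i j - σ(θ i - θ j)) = 0` for all `i`) on a strongly
stochastically transitive matrix `P` ranks players consistently with the true ordering `π`:
`π i > π j → θ i ≥ θ j`. -/
theorem elo_mle_recovers_sst_ranking
    (N : ℕ) (hN : 1 ≤ N)
    (P : Fin N → Fin N → ℝ)
    (hP0 : ∀ i j, 0 ≤ P i j) (hP1 : ∀ i j, P i j ≤ 1)
    (hPskew : ∀ i j, P j i = 1 - P i j)
    (π : Equiv.Perm (Fin N))
    (hSST : ∀ i j, π j < π i → ∀ k, P j k ≤ P i k)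
    (θ : Fin N → ℝ)
    (hstat : ∀ i, ∑ j, (P i j - logistic (θ i - θ j)) = 0) :
    ∀ i j, π j < π i → θ j ≤ θ i := by
  intro i j hij
  by_contra h
  push_neg at h
  have hi := hstat i
  have hj := hstat j
  rw [Finset.sum_sub_distrib, sub_eq_zero] at hi hj
  have hle : ∑ k, P j k ≤ ∑ k, P i k :=
    Finset.sum_le_sum fun k _ => hSST i j hij k
  have hne : (Finset.univ : Finset (Fin N)).Nonempty := by
    simpa [Finset.univ_nonempty_iff] using Fin.pos_iff_nonempty.1 hN
  have hlt : ∑ k, logistic (θ i - θ k) < ∑ k, logistic (θ j - θ k) :=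
    Finset.sum_lt_sum_of_nonempty hne fun k _ => logistic_strictMono (by linarith)
  linarith
end

section
/- There exist N ≥ 3 and a matrix P : Fin N → Fin N → ℝ with 0 ≤ P i j ≤ 1, P j i = 1 − P i j, and P i i = 1/2, such that P is weakly stochastically transitive with respect to an ordering π, yet the ranking induced by average win rates disagrees with π: there exist players i, j with π(i) > π(j) but ∑_k P i k < ∑_k P j k. -/
/-- There is a weakly stochastically transitive win-probability matrix whose
average-win-rate ranking disagrees with the ground-truth ordering: some pair of players
`i, j` has `π i > π j` yet `∑ k, P i k < ∑ k, P j k`. -/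
theorem wst_avg_winrate_can_disagree :
    ∃ (N : ℕ) (P : Fin N → Fin N → ℝ) (π : Equiv.Perm (Fin N)),
      3 ≤ N ∧
      (∀ i j, 0 ≤ P i j ∧ P i j ≤ 1) ∧
      (∀ i j, P j i = 1 - P i j) ∧
      (∀ i, P i i = 1 / 2) ∧
      (∀ i j, π j < π i → (1 / 2 : ℝ) ≤ P i j) ∧
      (∃ i j, π j < π i ∧ ∑ k, P i k < ∑ k, P j k) := by
  refine ⟨3, ![![1/2, 0, 1/2], ![1, 1/2, 1/2], ![1/2, 1/2, 1/2]], Equiv.refl _,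
    le_refl 3, ?_, ?_, ?_, ?_, ⟨2, 1, ?_, ?_⟩⟩
  · intro i j; fin_cases i <;> fin_cases j <;> norm_num
  · intro i j; fin_cases i <;> fin_cases j <;> norm_num
  · intro i; fin_cases i <;> norm_num
  · intro i j h
    fin_cases i <;> fin_cases j <;> first | (norm_num; done) | (simp at h)
  · decide
  · simp [Fin.sum_univ_three]
    norm_num
end

section
/- Fix N ≥ 2, distinct players i ≠ j in Fin N, an outcome o ∈ [0,1], a rating vector θ ∈ ℝ^N, and a learning rate η > 0. Let p = σ(θ_i − θ_j) with σ(x) = 1/(1+e^{−x}), and let θ' be the Elo-updated vector: θ'_i = θ_i + η(o − p), θ'_j = θ_j − η(o − p), and θ'_k = θ_k for k ∉ {i, j}. Then θ' = θ − η ∇f(θ), where f(θ) = −(o log σ(θ_i − θ_j) + (1 − o) log(1 − σ(θ_i − θ_j))) is the per-round binary cross-entropy loss; that is, the Elo update is exactly one step of (unprojected) online gradient descent on f with step size η. -/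
lemma logistic_pos (x : ℝ) : 0 < logistic x := by
  unfold logistic; positivity

lemma logistic_lt_one (x : ℝ) : logistic x < 1 := by
  unfold logistic
  rw [div_lt_one (by positivity)]
  linarith [Real.exp_pos (-x)]

lemma hasDerivAt_logistic (x : ℝ) :
    HasDerivAt logistic (logistic x * (1 - logistic x)) x := by
  have h1 : HasDerivAt (fun y : ℝ => 1 + Real.exp (-y)) (-Real.exp (-x)) x := by
    simpa using (Real.hasDerivAt_exp (-x)).comp x ((hasDerivAt_id x).neg) |>.const_add 1
  have h2 : (1 : ℝ) + Real.exp (-x) ≠ 0 := by positivity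
  have := h1.inv h2
  have heq : logistic = fun y : ℝ => (1 + Real.exp (-y))⁻¹ := by
    funext y; simp [logistic]
  rw [heq]
  refine this.congr_deriv ?_
  beta_reduce
  field_simp
  ring

lemma hasDerivAt_loss (o x : ℝ) :
    HasDerivAt (fun s => -(o * Real.log (logistic s) + (1 - o) * Real.log (1 - logistic s)))
      (logistic x - o) x := by
  have hp := logistic_pos x
  have hq := logistic_lt_one x
  have hd := hasDerivAt_logistic x
  have h1 : HasDerivAt (fun s => Real.log (logistic s))
      ((logistic x)⁻¹ * (logistic x * (1 - logistic x))) x :=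
    (Real.hasDerivAt_log hp.ne').comp x hd
  have h2 : HasDerivAt (fun s => Real.log (1 - logistic s))
      ((1 - logistic x)⁻¹ * -(logistic x * (1 - logistic x))) x := by
    have : HasDerivAt (fun s => 1 - logistic s) (-(logistic x * (1 - logistic x))) x :=
      hd.neg.const_add 1
    exact (Real.hasDerivAt_log (by linarith)).comp x this
  have := ((h1.const_mul o).add (h2.const_mul (1 - o))).neg
  refine this.congr_deriv ?_
  have hq' : (1 : ℝ) - logistic x ≠ 0 := by linarith
  field_simp
  ring

/-- The Elo rating update `θ' i = θ i + η (o - p)`, `θ' j = θ j - η (o - p)` (and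
`θ' k = θ k` otherwise), with prediction `p = σ(θ i - θ j)`, is exactly one step of
unprojected online gradient descent with step size `η` on the per-round binary
cross-entropy loss `f(θ) = -(o log σ(θ i - θ j) + (1 - o) log (1 - σ(θ i - θ j)))`. -/
theorem elo_update_is_gradient_step
    (N : ℕ) (hN : 2 ≤ N) (i j : Fin N) (hij : i ≠ j)
    (o : ℝ) (ho : o ∈ Set.Icc (0 : ℝ) 1) (η : ℝ) (hη : 0 < η)
    (θ θ' : EuclideanSpace ℝ (Fin N))
    (f : EuclideanSpace ℝ (Fin N) → ℝ)
    (hf : ∀ ψ, f ψ = -(o * Real.log (logistic (ψ i - ψ j))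
      + (1 - o) * Real.log (1 - logistic (ψ i - ψ j))))
    (hupd_i : θ' i = θ i + η * (o - logistic (θ i - θ j)))
    (hupd_j : θ' j = θ j - η * (o - logistic (θ i - θ j)))
    (hupd_k : ∀ k, k ≠ i → k ≠ j → θ' k = θ k) :
    θ' = θ - η • gradient f θ := by
  set c : ℝ := logistic (θ i - θ j) - o with hc
  set G : EuclideanSpace ℝ (Fin N) :=
    EuclideanSpace.single i c - EuclideanSpace.single j c with hG
  -- the linear map ψ ↦ ψ i - ψ j
  set L : EuclideanSpace ℝ (Fin N) →L[ℝ] ℝ :=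
    EuclideanSpace.proj i - EuclideanSpace.proj j with hL
  have hfun : f = (fun s => -(o * Real.log (logistic s)
      + (1 - o) * Real.log (1 - logistic s))) ∘ L := by
    funext ψ
    simp [hf ψ, hL, Function.comp]
  have hfd : HasFDerivAt f (c • (L : EuclideanSpace ℝ (Fin N) →L[ℝ] ℝ)) θ := by
    rw [hfun]
    have hLθ : L θ = θ i - θ j := by simp [hL]
    have := (hasDerivAt_loss o (θ i - θ j)).comp_hasFDerivAt θ
      (by simpa [hLθ] using L.hasFDerivAt (x := θ))
    simpa [hLθ, hc] using this
  have hdual : (InnerProductSpace.toDual ℝ (EuclideanSpace ℝ (Fin N))) G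
      = c • (L : EuclideanSpace ℝ (Fin N) →L[ℝ] ℝ) := by
    ext v
    simp [hG, hL, inner_sub_left, EuclideanSpace.inner_single_left, real_inner_smul_left]
    ring
  have hgrad : HasGradientAt f G θ := by
    rw [hasGradientAt_iff_hasFDerivAt, hdual]
    exact hfd
  rw [hgrad.gradient]
  ext k
  have hGk : G k = if k = i then c else if k = j then -c else 0 := by
    by_cases h1 : k = i
    · subst h1; simp [hG, EuclideanSpace.single_apply, hij]
    · by_cases h2 : k = j
      · subst h2; simp [hG, EuclideanSpace.single_apply, h1, Ne.symm hij]
      · simp [hG, EuclideanSpace.single_apply, h1, h2]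
  have : (θ - η • G) k = θ k - η * G k := by
    simp [PiLp.sub_apply, PiLp.smul_apply]
  rw [this, hGk]
  by_cases h1 : k = i
  · subst h1; simp [hupd_i, hc]; ring
  · by_cases h2 : k = j
    · subst h2; simp [h1, hupd_j, hc]
    · simp [h1, h2, hupd_k k h1 h2]
end
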